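/- Let p ≡ 1 (mod 6) be a prime and a ∈ F_p*. Then the trace of Frobenius b = p + 1 - N_{p,a} of the curve y² = x³ + a³ over F_p is not divisible by 6; more precisely b ≡ 2 or 4 (mod 6). -/

import Mathlib

open Finset MulAction

/-- Number of projective points (affine solutions plus the point at infinity)
on the Bachet curve `y² = x³ + a³` over `F_p`. -/
def bachetCount (p : ℕ) [Fact p.Prime] (a : ZMod p) : ℕ :=
  haveI : NeZero p := ⟨(Fact.out : p.Prime).ne_zero⟩
  (Finset.univ.filter (fun P : ZMod p × ZMod p => P.2 ^ 2 = P.1 ^ 3 + a ^ 3)).card + 1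

section Aux
variable {p : ℕ} [Fact p.Prime]

/-- number of square roots of a nonzero element is 0 or 2 (odd char ≠ 2 field). -/
lemma aux_sq_card (h2 : (2 : ZMod p) ≠ 0) (c : ZMod p) (hc : c ≠ 0) :
    (univ.filter fun y : ZMod p => y ^ 2 = c).card = 0 ∨
      (univ.filter fun y : ZMod p => y ^ 2 = c).card = 2 := by
  by_cases h : ∃ y : ZMod p, y ^ 2 = c
  · obtain ⟨y0, hy0⟩ := h
    right
    have hy0ne : y0 ≠ 0 := by rintro rfl; exact hc (by simpa using hy0.symm)
    have hne : y0 ≠ -y0 := by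
      intro h
      have h2y : (2 : ZMod p) * y0 = 0 := by linear_combination h
      rcases mul_eq_zero.mp h2y with h' | h'
      · exact h2 h'
      · exact hy0ne h'
    have hset : (univ.filter fun y : ZMod p => y ^ 2 = c) = {y0, -y0} := by
      ext y
      simp only [mem_filter, mem_univ, true_and, mem_insert, mem_singleton]
      constructor
      · intro hy
        have hfac : (y - y0) * (y + y0) = 0 := by linear_combination hy - hy0
        rcases mul_eq_zero.mp hfac with h' | h'
        · left; linear_combination h'
        · right; linear_combination h'
      · rintro (rfl | rfl)
        · exact hy0
        · linear_combination hy0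
    rw [hset, card_insert_of_notMem (by simpa using hne), card_singleton]
  · left
    rw [Finset.card_eq_zero, Finset.filter_eq_empty_iff]
    exact fun y _ hy => h ⟨y, hy⟩

/-- number of cube roots of a nonzero cube is 3 when there is a primitive cube root of unity. -/
lemma aux_cube_card (ζ : ZMod p) (hz3 : ζ ^ 3 = 1) (hz1 : ζ ≠ 1) (hz2 : ζ ^ 2 ≠ 1)
    (hzsum : ζ ^ 2 + ζ + 1 = 0) (c : ZMod p) (hc : c ≠ 0) :
    (univ.filter fun x : ZMod p => x ^ 3 = c ^ 3).card = 3 := by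
  have hzz : ζ ≠ ζ ^ 2 := by
    intro h
    have hz0 : ζ ≠ 0 := by rintro rfl; simp at hz3
    apply hz1.symm
    have h' : ζ * 1 = ζ * ζ := by rw [mul_one, ← sq, ← h]
    exact mul_left_cancel₀ hz0 h'
  have hset : (univ.filter fun x : ZMod p => x ^ 3 = c ^ 3) = {c, ζ * c, ζ ^ 2 * c} := by
    ext x
    simp only [mem_filter, mem_univ, true_and, mem_insert, mem_singleton]
    constructor
    · intro hx
      have hfac : (x - c) * (x - ζ * c) * (x - ζ ^ 2 * c) = 0 := by
        linear_combination hx + (ζ * x * c ^ 2 - c * x ^ 2) * hzsum - c ^ 3 * hz3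
      rcases mul_eq_zero.mp hfac with h' | h'
      · rcases mul_eq_zero.mp h' with h'' | h''
        · left; linear_combination h''
        · right; left; linear_combination h''
      · right; right; linear_combination h'
    · rintro (rfl | rfl | rfl)
      · rfl
      · rw [mul_pow, hz3, one_mul]
      · rw [mul_pow, ← pow_mul, mul_comm 2 3, pow_mul, hz3, one_pow, one_mul]
  rw [hset]
  rw [card_insert_of_notMem, card_insert_of_notMem, card_singleton]
  · simp only [mem_singleton]
    intro h
    exact hzz (mul_right_cancel₀ hc h)
  · simp only [mem_insert, mem_singleton]
    rintro (h | h)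
    · exact hz1 (mul_right_cancel₀ hc (by rw [← h, one_mul])).symm
    · exact hz2 (mul_right_cancel₀ hc (by rw [← h, one_mul])).symm

end Aux

section Aux2
variable {p : ℕ} [Fact p.Prime]

lemma aux_mod3 (a : ZMod p) (u : (ZMod p)ˣ) (hu : orderOf u = 3) :
    (univ.filter fun P : ZMod p × ZMod p => P.2 ^ 2 = P.1 ^ 3 + a ^ 3).card ≡
      (univ.filter fun y : ZMod p => y ^ 2 = a ^ 3).card [MOD 3] := by
  classical
  set X := {P : ZMod p × ZMod p // P.2 ^ 2 = P.1 ^ 3 + a ^ 3} with hXdef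
  have hu3 : u ^ 3 = 1 := by rw [← hu]; exact pow_orderOf_eq_one u
  have humem : u ∈ rootsOfUnity 3 (ZMod p) := (mem_rootsOfUnity 3 u).mpr hu3
  have hz3 : ((u : (ZMod p)ˣ) : ZMod p) ^ 3 = 1 := by
    rw [← Units.val_pow_eq_pow_val, hu3, Units.val_one]
  have hz1 : ((u : (ZMod p)ˣ) : ZMod p) ≠ 1 := by
    intro h
    have : u = 1 := Units.ext (by simpa using h)
    rw [this, orderOf_one] at hu; omega
  letI act3 : MulAction (rootsOfUnity 3 (ZMod p)) X :=
    { smul := fun g P => ⟨(((g : (ZMod p)ˣ) : ZMod p) * P.1.1, P.1.2), by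
        have hg : ((g : (ZMod p)ˣ) : ZMod p) ^ 3 = 1 := by
          have hg' := (mem_rootsOfUnity 3 (g : (ZMod p)ˣ)).mp g.2
          rw [← Units.val_pow_eq_pow_val, hg', Units.val_one]
        show P.1.2 ^ 2 = (((g : (ZMod p)ˣ) : ZMod p) * P.1.1) ^ 3 + a ^ 3
        rw [mul_pow, hg, one_mul]; exact P.2⟩
      one_smul := fun P => Subtype.ext (Prod.ext (by
        show (((1 : rootsOfUnity 3 (ZMod p)) : (ZMod p)ˣ) : ZMod p) * P.1.1 = P.1.1
        simp) rfl)
      mul_smul := fun g h P => Subtype.ext (Prod.ext (by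
        show (((g * h : rootsOfUnity 3 (ZMod p)) : (ZMod p)ˣ) : ZMod p) * P.1.1 =
          ((g : (ZMod p)ˣ) : ZMod p) * (((h : (ZMod p)ˣ) : ZMod p) * P.1.1)
        push_cast; ring) rfl) }
  have hprim : IsPrimitiveRoot u 3 := hu ▸ IsPrimitiveRoot.orderOf u
  have h3grp : IsPGroup 3 (rootsOfUnity 3 (ZMod p)) :=
    IsPGroup.of_card (by rw [hprim.card_rootsOfUnity', pow_one])
  have hmod := h3grp.card_modEq_card_fixedPoints X
  -- identify the two cardinalities
  have hXcard : Nat.card X = (univ.filter fun P : ZMod p × ZMod p =>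
      P.2 ^ 2 = P.1 ^ 3 + a ^ 3).card := by
    rw [Nat.card_eq_fintype_card, Fintype.card_subtype]
  -- fixed points
  have hfix : Nat.card (fixedPoints (rootsOfUnity 3 (ZMod p)) X) =
      (univ.filter fun y : ZMod p => y ^ 2 = a ^ 3).card := by
    rw [← Fintype.card_subtype, Nat.card_eq_fintype_card]
    apply Fintype.card_congr
    refine
      { toFun := fun Q => ⟨Q.1.1.2, ?_⟩
        invFun := fun y => ⟨⟨(0, y.1), by simpa using y.2⟩, ?_⟩
        left_inv := ?_
        right_inv := ?_ }
    · have hQ := Q.2 ⟨u, humem⟩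
      have hx : ((u : (ZMod p)ˣ) : ZMod p) * Q.1.1.1 = Q.1.1.1 :=
        congrArg (fun z : X => z.1.1) hQ
      have hx0 : Q.1.1.1 = 0 := by
        by_contra hne
        exact hz1 (mul_right_cancel₀ hne (by rw [hx, one_mul]))
      have := Q.1.2
      rw [hx0] at this
      simpa using this
    · intro g
      refine Subtype.ext (Prod.ext ?_ rfl)
      show ((g : (ZMod p)ˣ) : ZMod p) * 0 = 0
      ring
    · intro Q
      have hQ := Q.2 ⟨u, humem⟩
      have hx : ((u : (ZMod p)ˣ) : ZMod p) * Q.1.1.1 = Q.1.1.1 :=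
        congrArg (fun z : X => z.1.1) hQ
      have hx0 : Q.1.1.1 = 0 := by
        by_contra hne
        exact hz1 (mul_right_cancel₀ hne (by rw [hx, one_mul]))
      exact Subtype.ext (Subtype.ext (Prod.ext hx0.symm rfl))
    · intro y; rfl
  rw [hXcard, hfix] at hmod
  exact hmod
end Aux2

section Aux3
variable {p : ℕ} [Fact p.Prime]

lemma aux_mod2 (a : ZMod p) (hp2 : p ≠ 2) :
    (univ.filter fun P : ZMod p × ZMod p => P.2 ^ 2 = P.1 ^ 3 + a ^ 3).card ≡
      (univ.filter fun x : ZMod p => x ^ 3 = (-a) ^ 3).card [MOD 2] := by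
  classical
  set X := {P : ZMod p × ZMod p // P.2 ^ 2 = P.1 ^ 3 + a ^ 3} with hXdef
  have hchar : ringChar (ZMod p) = p := ZMod.ringChar_zmod_n p
  have h2K : (2 : ZMod p) ≠ 0 := by
    intro h
    have hdvd : p ∣ 2 := (ZMod.natCast_eq_zero_iff 2 p).mp (by exact_mod_cast h)
    have h1 := Nat.le_of_dvd (by norm_num) hdvd
    have h2 := (Fact.out : p.Prime).two_le
    omega
  have hord : orderOf (-1 : (ZMod p)ˣ) = 2 := by
    rw [← orderOf_units, Units.coe_neg_one, orderOf_neg_one, hchar, if_neg hp2]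
  have hmem : (-1 : (ZMod p)ˣ) ∈ rootsOfUnity 2 (ZMod p) :=
    (mem_rootsOfUnity 2 (-1)).mpr (by rw [← hord]; exact pow_orderOf_eq_one _)
  letI act2 : MulAction (rootsOfUnity 2 (ZMod p)) X :=
    { smul := fun g P => ⟨(P.1.1, ((g : (ZMod p)ˣ) : ZMod p) * P.1.2), by
        have hg : ((g : (ZMod p)ˣ) : ZMod p) ^ 2 = 1 := by
          have hg' := (mem_rootsOfUnity 2 (g : (ZMod p)ˣ)).mp g.2
          rw [← Units.val_pow_eq_pow_val, hg', Units.val_one]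
        show (((g : (ZMod p)ˣ) : ZMod p) * P.1.2) ^ 2 = P.1.1 ^ 3 + a ^ 3
        rw [mul_pow, hg, one_mul]; exact P.2⟩
      one_smul := fun P => Subtype.ext (Prod.ext rfl (by
        show (((1 : rootsOfUnity 2 (ZMod p)) : (ZMod p)ˣ) : ZMod p) * P.1.2 = P.1.2
        simp))
      mul_smul := fun g h P => Subtype.ext (Prod.ext rfl (by
        show (((g * h : rootsOfUnity 2 (ZMod p)) : (ZMod p)ˣ) : ZMod p) * P.1.2 =
          ((g : (ZMod p)ˣ) : ZMod p) * (((h : (ZMod p)ˣ) : ZMod p) * P.1.2)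
        push_cast; ring)) }
  have hprim : IsPrimitiveRoot (-1 : (ZMod p)ˣ) 2 := hord ▸ IsPrimitiveRoot.orderOf _
  have h2grp : IsPGroup 2 (rootsOfUnity 2 (ZMod p)) :=
    IsPGroup.of_card (by rw [hprim.card_rootsOfUnity', pow_one])
  have hmod := h2grp.card_modEq_card_fixedPoints X
  have hXcard : Nat.card X = (univ.filter fun P : ZMod p × ZMod p =>
      P.2 ^ 2 = P.1 ^ 3 + a ^ 3).card := by
    rw [Nat.card_eq_fintype_card, Fintype.card_subtype]
  have hy0 : ∀ Q : fixedPoints (rootsOfUnity 2 (ZMod p)) X, Q.1.1.2 = 0 := by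
    intro Q
    have hQ := Q.2 ⟨-1, hmem⟩
    have hx : ((-1 : (ZMod p)ˣ) : ZMod p) * Q.1.1.2 = Q.1.1.2 :=
      congrArg (fun z : X => z.1.2) hQ
    have h2y : (2 : ZMod p) * Q.1.1.2 = 0 := by
      rw [Units.coe_neg_one] at hx; linear_combination -hx
    rcases mul_eq_zero.mp h2y with h' | h'
    · exact absurd h' h2K
    · exact h'
  have hfix : Nat.card (fixedPoints (rootsOfUnity 2 (ZMod p)) X) =
      (univ.filter fun x : ZMod p => x ^ 3 = (-a) ^ 3).card := by
    rw [← Fintype.card_subtype, Nat.card_eq_fintype_card]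
    apply Fintype.card_congr
    refine
      { toFun := fun Q => ⟨Q.1.1.1, ?_⟩
        invFun := fun x => ⟨⟨(x.1, 0), by
          have := x.2
          show (0 : ZMod p) ^ 2 = x.1 ^ 3 + a ^ 3
          linear_combination -this⟩, ?_⟩
        left_inv := ?_
        right_inv := ?_ }
    · have h0 := hy0 Q
      have := Q.1.2
      rw [h0] at this
      linear_combination -this
    · intro g
      refine Subtype.ext (Prod.ext rfl ?_)
      show ((g : (ZMod p)ˣ) : ZMod p) * 0 = 0
      ring
    · intro Q
      exact Subtype.ext (Subtype.ext (Prod.ext rfl (hy0 Q).symm))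
    · intro x; rfl
  rw [hXcard, hfix] at hmod
  exact hmod
end Aux3

theorem stmt_3 (p : ℕ) [Fact p.Prime] (hp : p % 6 = 1) (a : ZMod p) (ha : a ≠ 0) :
    ¬ (6 : ℤ) ∣ ((p : ℤ) + 1 - (bachetCount p a : ℤ)) ∧
      (((p : ℤ) + 1 - (bachetCount p a : ℤ)) ≡ 2 [ZMOD 6] ∨
        ((p : ℤ) + 1 - (bachetCount p a : ℤ)) ≡ 4 [ZMOD 6]) := by
  haveI : NeZero p := ⟨(Fact.out : p.Prime).ne_zero⟩
  have hp2 : p ≠ 2 := by omega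
  have h2K : (2 : ZMod p) ≠ 0 := by
    intro h
    have hdvd : p ∣ 2 := (ZMod.natCast_eq_zero_iff 2 p).mp (by exact_mod_cast h)
    have h1 := Nat.le_of_dvd (by norm_num) hdvd
    have h2 := (Fact.out : p.Prime).two_le
    omega
  haveI : Fact (Nat.Prime 3) := ⟨by norm_num⟩
  obtain ⟨u, hu⟩ := exists_prime_orderOf_dvd_card (G := (ZMod p)ˣ) 3
    (by rw [ZMod.card_units p]; omega)
  set ζ : ZMod p := ((u : (ZMod p)ˣ) : ZMod p) with hζ
  have hu3 : u ^ 3 = 1 := by rw [← hu]; exact pow_orderOf_eq_one u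
  have hz3 : ζ ^ 3 = 1 := by rw [hζ, ← Units.val_pow_eq_pow_val, hu3, Units.val_one]
  have hz1 : ζ ≠ 1 := by
    intro h
    have hu1 : u = 1 := Units.ext (by rw [Units.val_one]; exact h)
    rw [hu1, orderOf_one] at hu; omega
  have hz2 : ζ ^ 2 ≠ 1 := by
    intro h
    have hu2 : u ^ 2 = 1 := Units.ext (by rw [Units.val_pow_eq_pow_val, ← hζ, h, Units.val_one])
    have := orderOf_dvd_of_pow_eq_one hu2
    rw [hu] at this
    omega
  have hzsum : ζ ^ 2 + ζ + 1 = 0 := by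
    have hfac : (ζ - 1) * (ζ ^ 2 + ζ + 1) = 0 := by linear_combination hz3
    rcases mul_eq_zero.mp hfac with h | h
    · exact absurd (by linear_combination h : ζ = 1) hz1
    · exact h
  have hsq := aux_sq_card h2K (a ^ 3) (pow_ne_zero 3 ha)
  have hcube := aux_cube_card ζ hz3 hz1 hz2 hzsum (-a) (neg_ne_zero.mpr ha)
  have hm3 := aux_mod3 a u hu
  have hm2 := aux_mod2 a hp2
  rw [hcube] at hm2
  set A := (Finset.univ.filter fun P : ZMod p × ZMod p =>
    P.2 ^ 2 = P.1 ^ 3 + a ^ 3).card with hA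
  have hbc : bachetCount p a = A + 1 := rfl
  have hA2 : A % 2 = 1 := hm2
  have hA3 : A % 3 = 0 ∨ A % 3 = 2 := by
    rcases hsq with h | h <;> rw [h] at hm3
    · left; exact hm3
    · right; exact hm3
  rw [hbc]
  constructor
  · omega
  · simp only [Int.ModEq]
    omega
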